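/- Fix a job assignment Ŷ (a function specifying, for each machine, the set of jobs it processes), and let Φ(Ŷ) be the set of all schedules whose machine job sets agree with Ŷ. If π† ∈ Φ(Ŷ) minimizes the total setup time Σ_{i∈M} T_i(π) over all π ∈ Φ(Ŷ), then π† also minimizes the maximum regret over Φ(Ŷ): R_max(π†) ≤ R_max(π̂) for every π̂ ∈ Φ(Ŷ). -/

import Mathlib

open Finset

noncomputable section

/-- Total setup time of machine `i` processing the job list `l`:
the initial setup for the first job plus the setup times over consecutive pairs
(`0` if the list is empty). -/
def totalSetup {M N : Type*} (setup0 : M → N → ℝ) (setup : M → N → N → ℝ)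
    (i : M) (l : List N) : ℝ :=
  match l with
  | [] => 0
  | k :: rest => setup0 i k + (List.zipWith (setup i) (k :: rest) rest).sum

/-- A schedule assigns to each machine a finite sequence of jobs without repetition,
such that every job appears in exactly one machine's sequence. -/
structure Schedule (M N : Type*) where
  seq : M → List N
  nodup : ∀ i, (seq i).Nodup
  cover : ∀ j : N, ∃! i : M, j ∈ seq i

variable {M N : Type*}

/-- Completion time of machine `i` in schedule `sc` under scenario `p`. -/
def complTime (setup0 : M → N → ℝ) (setup : M → N → N → ℝ)
    (sc : Schedule M N) (p : M → N → ℝ) (i : M) : ℝ :=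
  totalSetup setup0 setup i (sc.seq i) + ((sc.seq i).map (p i)).sum

/-- Makespan of schedule `sc` under scenario `p`: max machine completion time. -/
def makespan [Fintype M] [Nonempty M] (setup0 : M → N → ℝ) (setup : M → N → N → ℝ)
    (sc : Schedule M N) (p : M → N → ℝ) : ℝ :=
  Finset.univ.sup' Finset.univ_nonempty (complTime setup0 setup sc p)

/-- Optimal makespan under scenario `p`: minimum over all schedules. -/
def optMakespan [Fintype M] [Nonempty M] (setup0 : M → N → ℝ) (setup : M → N → N → ℝ)
    (p : M → N → ℝ) : ℝ :=
  ⨅ sc : Schedule M N, makespan setup0 setup sc p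

/-- The scenario set `S`: all processing-time matrices between the bounds. -/
def ScenSet (lb ub : M → N → ℝ) : Set (M → N → ℝ) :=
  {p | ∀ i j, lb i j ≤ p i j ∧ p i j ≤ ub i j}

/-- Regret of schedule `sc` under scenario `p`. -/
def regret [Fintype M] [Nonempty M] (setup0 : M → N → ℝ) (setup : M → N → N → ℝ)
    (sc : Schedule M N) (p : M → N → ℝ) : ℝ :=
  makespan setup0 setup sc p - optMakespan setup0 setup p

/-- Maximum regret of schedule `sc` over the scenario set. -/
def maxRegret [Fintype M] [Nonempty M] (setup0 : M → N → ℝ) (setup : M → N → N → ℝ)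
    (lb ub : M → N → ℝ) (sc : Schedule M N) : ℝ :=
  ⨆ p : ScenSet lb ub, regret setup0 setup sc p.1

/-- The extreme scenario of schedule `sc` for machine `f`: upper bounds on jobs
assigned to machine `f`, lower bounds elsewhere. -/
def extremeScen [DecidableEq N] (lb ub : M → N → ℝ) (sc : Schedule M N) (f : M) :
    M → N → ℝ :=
  fun i j => if j ∈ sc.seq f then ub i j else lb i j

lemma zipWith_setup_nonneg {M N : Type*} (setup : M → N → N → ℝ)
    (hs : ∀ i j k, 0 ≤ setup i j k) (i : M) :
    ∀ l l' : List N, 0 ≤ (List.zipWith (setup i) l l').sum := by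
  intro l
  induction l with
  | nil => intro l'; simp
  | cons a t ih =>
    intro l'
    cases l' with
    | nil => simp
    | cons b t' => simpa using add_nonneg (hs i a b) (ih t')

lemma totalSetup_nonneg {M N : Type*} (setup0 : M → N → ℝ) (setup : M → N → N → ℝ)
    (hs0 : ∀ i k, 0 ≤ setup0 i k) (hs : ∀ i j k, 0 ≤ setup i j k)
    (i : M) (l : List N) : 0 ≤ totalSetup setup0 setup i l := by
  cases l with
  | nil => simp [totalSetup]
  | cons k rest => exact add_nonneg (hs0 i k) (zipWith_setup_nonneg setup hs i _ _)

/-- Fix a job assignment `Y` (for each machine, the set of jobs it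
processes). If a schedule `scOpt` compatible with `Y` minimizes the total setup time
over all schedules compatible with `Y`, then it also minimizes the maximum regret
over all schedules compatible with `Y`. -/
theorem optimal_sequencing_minimizes_maxRegret
    [Fintype M] [Nonempty M] [DecidableEq N]
    (setup0 : M → N → ℝ) (setup : M → N → N → ℝ) (lb ub : M → N → ℝ)
    (hs0 : ∀ i k, 0 ≤ setup0 i k) (hs : ∀ i j k, 0 ≤ setup i j k)
    (hlb : ∀ i j, 0 ≤ lb i j) (hlu : ∀ i j, lb i j ≤ ub i j)
    (Y : M → Finset N)
    (scOpt : Schedule M N) (hOpt : ∀ i, (scOpt.seq i).toFinset = Y i)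
    (hmin : ∀ sc : Schedule M N, (∀ i, (sc.seq i).toFinset = Y i) →
      ∑ i : M, totalSetup setup0 setup i (scOpt.seq i) ≤
        ∑ i : M, totalSetup setup0 setup i (sc.seq i))
    (sc : Schedule M N) (hsc : ∀ i, (sc.seq i).toFinset = Y i) :
    maxRegret setup0 setup lb ub scOpt ≤ maxRegret setup0 setup lb ub sc := by
  classical
  haveI : Nonempty (Schedule M N) := ⟨scOpt⟩
  -- per-machine setup minimality of scOpt
  have hTi : ∀ i0 : M, totalSetup setup0 setup i0 (scOpt.seq i0) ≤
      totalSetup setup0 setup i0 (sc.seq i0) := by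
    intro i0
    have hmem0 : ∀ j : N, j ∈ sc.seq i0 ↔ j ∈ scOpt.seq i0 := fun j => by
      rw [← List.mem_toFinset, ← List.mem_toFinset, hsc i0, ← hOpt i0]
    set newseq : M → List N := Function.update scOpt.seq i0 (sc.seq i0) with hnewseq
    have hns : ∀ i, newseq i = if i = i0 then sc.seq i0 else scOpt.seq i := by
      intro i
      by_cases h : i = i0
      · subst h; simp [hnewseq]
      · simp [hnewseq, Function.update_of_ne h, h]
    let sc' : Schedule M N :=
      { seq := newseq
        nodup := by
          intro i; rw [hns]
          split
          · exact sc.nodup i0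
          · exact scOpt.nodup i
        cover := by
          intro j
          have hm : ∀ i, j ∈ newseq i ↔ j ∈ scOpt.seq i := by
            intro i; rw [hns]
            split
            · next h => rw [h]; exact hmem0 j
            · exact Iff.rfl
          obtain ⟨i, hi, hu⟩ := scOpt.cover j
          exact ⟨i, (hm i).mpr hi, fun i' h' => hu i' ((hm i').mp h')⟩ }
    have hsc' : ∀ i, (sc'.seq i).toFinset = Y i := by
      intro i
      show (newseq i).toFinset = Y i
      rw [hns]
      split
      · next h => rw [h]; exact hsc i0
      · exact hOpt i
    have key := hmin sc' hsc'
    have hL : ∑ i : M, totalSetup setup0 setup i (sc'.seq i)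
        = totalSetup setup0 setup i0 (sc.seq i0)
          + ∑ i ∈ univ.erase i0, totalSetup setup0 setup i (scOpt.seq i) := by
      rw [← Finset.add_sum_erase univ (fun i => totalSetup setup0 setup i (sc'.seq i))
        (mem_univ i0)]
      congr 1
      · show totalSetup setup0 setup i0 (newseq i0) = _
        rw [hns]; simp
      · refine Finset.sum_congr rfl fun i hi => ?_
        show totalSetup setup0 setup i (newseq i) = _
        rw [hns, if_neg (Finset.ne_of_mem_erase hi)]
    have hR : ∑ i : M, totalSetup setup0 setup i (scOpt.seq i)
        = totalSetup setup0 setup i0 (scOpt.seq i0)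
          + ∑ i ∈ univ.erase i0, totalSetup setup0 setup i (scOpt.seq i) :=
      (Finset.add_sum_erase univ _ (mem_univ i0)).symm
    rw [hL, hR] at key
    linarith
  -- equal processing sums
  have hperm : ∀ i, (scOpt.seq i).Perm (sc.seq i) := fun i =>
    List.perm_of_nodup_nodup_toFinset_eq (scOpt.nodup i) (sc.nodup i)
      ((hOpt i).trans (hsc i).symm)
  have hsum : ∀ (p : M → N → ℝ) (i : M),
      ((scOpt.seq i).map (p i)).sum = ((sc.seq i).map (p i)).sum := fun p i =>
    ((hperm i).map (p i)).sum_eq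
  -- pointwise makespan comparison
  have hmake : ∀ p : M → N → ℝ,
      makespan setup0 setup scOpt p ≤ makespan setup0 setup sc p := by
    intro p
    refine Finset.sup'_le _ _ fun i _ => ?_
    have hc : complTime setup0 setup scOpt p i ≤ complTime setup0 setup sc p i := by
      unfold complTime
      exact add_le_add (hTi i) (le_of_eq (hsum p i))
    exact hc.trans (Finset.le_sup' _ (mem_univ i))
  -- nonnegativity of makespans on the scenario set
  have hmknn : ∀ (sc'' : Schedule M N) (p : M → N → ℝ), p ∈ ScenSet lb ub →
      0 ≤ makespan setup0 setup sc'' p := by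
    intro sc'' p hp
    obtain ⟨i⟩ := ‹Nonempty M›
    refine le_trans ?_ (Finset.le_sup' _ (mem_univ i))
    refine add_nonneg (totalSetup_nonneg setup0 setup hs0 hs i _) ?_
    refine List.sum_nonneg fun x hx => ?_
    obtain ⟨j, _, rfl⟩ := List.mem_map.mp hx
    exact le_trans (hlb i j) (hp i j).1
  have hoptnn : ∀ p : M → N → ℝ, p ∈ ScenSet lb ub →
      0 ≤ optMakespan setup0 setup p := fun p hp =>
    le_ciInf fun sc'' => hmknn sc'' p hp
  -- boundedness of the regret of sc over the scenario set
  have hbdd : BddAbove (Set.range fun p : ScenSet lb ub =>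
      regret setup0 setup sc p.1) := by
    refine ⟨makespan setup0 setup sc ub, ?_⟩
    rintro x ⟨p, rfl⟩
    have h1 : regret setup0 setup sc p.1 ≤ makespan setup0 setup sc p.1 := by
      have := hoptnn p.1 p.2
      unfold regret; linarith
    refine h1.trans ?_
    refine Finset.sup'_le _ _ fun i _ => ?_
    have hc : complTime setup0 setup sc p.1 i ≤ complTime setup0 setup sc ub i := by
      unfold complTime
      exact add_le_add_right (List.sum_le_sum fun j _ => (p.2 i j).2) _
    exact hc.trans (Finset.le_sup' _ (mem_univ i))
  refine ciSup_mono hbdd fun p => ?_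
  unfold regret
  exact sub_le_sub_right (hmake p.1) _

end
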